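/- Let S^sym be the WSTTS of a signal σ and a TSWA W. For every reachable symbolic state (l,Z,ā) ∈ Reach(S^sym), either ā = ε, or there exists t ≥ 0 such that for all ν ∈ Z, ā = Values(σ([t,ν(T)))). -/

import Mathlib

attribute [local instance] Classical.propDecidable

namespace QTPM

/-- Comparison operators `<, ≤, >, ≥` used in constraints, guards and zones. -/
inductive CmpOp : Type
  | lt | le | gt | ge

/-- Semantics of a comparison operator on reals. -/
def CmpOp.eval : CmpOp → ℝ → ℝ → Prop
  | .lt, a, b => a < b
  | .le, a, b => a ≤ b
  | .gt, a, b => a > b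
  | .ge, a, b => a ≥ b

/-- A semiring `𝕊 = (S, ⊕, ⊗, e⊕, e⊗)`: `(S,⊕,e⊕)` a commutative monoid,
`(S,⊗,e⊗)` a monoid, `⊗` distributing over `⊕` on both sides, `e⊕` absorbing for `⊗`. -/
class CSemiring (S : Type) : Type where
  add : S → S → S
  mul : S → S → S
  zero : S
  one : S
  add_assoc : ∀ a b c : S, add (add a b) c = add a (add b c)
  add_comm : ∀ a b : S, add a b = add b a
  add_zero : ∀ a : S, add a zero = a
  mul_assoc : ∀ a b c : S, mul (mul a b) c = mul a (mul b c)
  mul_one : ∀ a : S, mul a one = a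
  one_mul : ∀ a : S, mul one a = a
  left_distrib : ∀ a b c : S, mul a (add b c) = add (mul a b) (mul a c)
  right_distrib : ∀ a b c : S, mul (add a b) c = add (mul a c) (mul b c)
  zero_mul : ∀ a : S, mul zero a = zero
  mul_zero : ∀ a : S, mul a zero = zero

/-- A semiring is idempotent if `s ⊕ s = s` for every `s`. -/
def Idem (S : Type) [CSemiring S] : Prop := ∀ s : S, CSemiring.add s s = s

/-- The canonical order of a semiring: `s ⪯ s'` iff `s ⊕ s' = s'`. -/
def csLe {S : Type} [CSemiring S] (s s' : S) : Prop := CSemiring.add s s' = s'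

/-- A complete semiring: every (possibly infinite) family has a sum `⊕`, extending the
binary sum, invariant under partitions of the index set, and over which `⊗` distributes
on both sides. -/
class CompleteCSemiring (S : Type) [CSemiring S] : Type 1 where
  iSum : {ι : Type} → (ι → S) → S
  iSum_empty : ∀ f : Empty → S, iSum f = CSemiring.zero
  iSum_single : ∀ f : Unit → S, iSum f = f ()
  iSum_pair : ∀ f : Bool → S, iSum f = CSemiring.add (f true) (f false)
  iSum_partition : ∀ {ι κ : Type} (p : ι → κ) (f : ι → S),
    iSum f = iSum fun k : κ => iSum fun i : {i : ι // p i = k} => f i.1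
  mul_iSum : ∀ {ι : Type} (s : S) (f : ι → S),
    CSemiring.mul s (iSum f) = iSum fun i => CSemiring.mul s (f i)
  iSum_mul : ∀ {ι : Type} (f : ι → S) (s : S),
    CSemiring.mul (iSum f) s = iSum fun i => CSemiring.mul (f i) s

/-- A piecewise-constant signal `σ = a₁^{τ₁} ⋯ a_n^{τ_n}`: a finite list of
(value, duration) pairs with positive durations. -/
structure Signal (X : Type) : Type where
  entries : List ((X → ℝ) × ℝ)
  pos : ∀ e ∈ entries, (0:ℝ) < e.2

namespace Signal

variable {X : Type}

/-- A default entry, used as a fallback value for out-of-range indexing. -/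
noncomputable def dflt (X : Type) : (X → ℝ) × ℝ := (fun _ => 0, 1)

/-- Prefix sums of the durations: `pref σ i = τ₁ + ⋯ + τᵢ`. -/
noncomputable def pref (σ : Signal X) (i : ℕ) : ℝ := ((σ.entries.take i).map Prod.snd).sum

/-- The duration `|σ| = τ₁ + ⋯ + τ_n` of a signal. -/
noncomputable def dur (σ : Signal X) : ℝ := (σ.entries.map Prod.snd).sum

/-- The number `n` of entries of the signal. -/
def len (σ : Signal X) : ℕ := σ.entries.length

/-- The value `a_{i+1}` of the `i`-th entry (0-indexed). -/
noncomputable def val (σ : Signal X) (i : ℕ) : X → ℝ := (σ.entries.getD i (dflt X)).1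

/-- The value `σ(t)` of the signal at time `t`: the value `a_k` where
`τ₁+⋯+τ_{k-1} ≤ t < τ₁+⋯+τ_k`. -/
noncomputable def valAt (σ : Signal X) (t : ℝ) : X → ℝ :=
  σ.val ((List.range σ.len).findIdx fun i => decide (t < σ.pref (i+1)))

end Signal

/-- Stutter-free sequences: the elements of `(ℝ^X)^⊛` (no two equal consecutive values). -/
def StutterFree {V : Type} (l : List V) : Prop := l.Chain' (· ≠ ·)

/-- Absorbing concatenation `∘` of (stutter-free) sequences: concatenate and merge
equal consecutive elements. -/
noncomputable def absCat {V : Type} (l l' : List V) : List V :=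
  List.destutter (· ≠ ·) (l ++ l')

/-- `Values(σ([t,t')))`: the stutter-free sequence of values of `σ` on the
interval `[t,t')`. -/
noncomputable def Signal.valuesOn {X : Type} (σ : Signal X) (t t' : ℝ) : List (X → ℝ) :=
  List.destutter (· ≠ ·)
    (((List.range σ.len).filter fun i => decide (σ.pref i < t' ∧ t < σ.pref (i+1))).map σ.val)

/-- The restriction `σ([t,t'))` of a signal to the interval `[t,t')`. -/
noncomputable def Signal.restrict {X : Type} (σ : Signal X) (t t' : ℝ) : Signal X where
  entries := (List.range σ.len).filterMap fun i =>
    if h : max (σ.pref i) t < min (σ.pref (i+1)) t' then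
      some (σ.val i, min (σ.pref (i+1)) t' - max (σ.pref i) t)
    else none
  pos := by
    intro e he
    rw [List.mem_filterMap] at he
    obtain ⟨i, -, hi⟩ := he
    by_cases h : max (σ.pref i) t < min (σ.pref (i+1)) t'
    · rw [dif_pos h] at hi
      injection hi with h'
      subst h'
      simpa using sub_pos.mpr h
    · rw [dif_neg h] at hi
      exact absurd hi (by simp)

/-- The constant signal `a^t`. -/
noncomputable def constSignal {X : Type} (a : X → ℝ) (t : ℝ) : Signal X where
  entries := if h : (0:ℝ) < t then [(a, t)] else []
  pos := by
    intro e he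
    by_cases h : (0:ℝ) < t
    · rw [dif_pos h] at he
      simp only [List.mem_singleton] at he
      subst he
      exact h
    · rw [dif_neg h] at he
      simp at he

/-- Clock guards: finite conjunctions of `c ⋈ d` with `d ∈ ℤ≥0`. -/
abbrev Guard (C : Type) : Type := List (C × CmpOp × ℕ)

/-- Constraints over the variables `X`: finite conjunctions of `x ⋈ d` with `d ∈ ℝ`. -/
abbrev VarConstraint (X : Type) : Type := List (X × CmpOp × ℝ)

/-- A timed symbolic automaton (TSA) over `ℝ`, with locations `L` and clocks `C`. -/
structure TSA (X L C : Type) : Type where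
  L₀ : Set L
  LF : Set L
  Δ : Set (L × Guard C × Set C × L)
  Δ_finite : Δ.Finite
  Λ : L → VarConstraint X

/-- A timed symbolic weighted automaton (TSWA) over `ℝ` and a complete semiring `S`:
a TSA together with a cost function `κ`. -/
structure TSWA (X L C S : Type) [CSemiring S] [CompleteCSemiring S]
    extends TSA X L C : Type where
  κ : VarConstraint X → List (X → ℝ) → S

/-- Satisfaction `ν ⊨ g` of a clock guard. -/
def guardSat {C : Type} (ν : C → ℝ) (g : Guard C) : Prop :=
  ∀ p ∈ g, p.2.1.eval (ν p.1) (p.2.2 : ℝ)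

/-- The reset `ν[ρ := 0]` of a clock valuation. -/
noncomputable def resetVal {C : Type} (ν : C → ℝ) (ρ : Set C) : C → ℝ :=
  fun c => if c ∈ ρ then 0 else ν c

/-- States of the WTTS: `(l, ν, t, ā)`. -/
abbrev WState (X L C : Type) : Type := L × (C → ℝ) × ℝ × List (X → ℝ)

/-- The state space `Q` of the WTTS of `σ` and a TSWA. -/
def wttsQ {X L C : Type} (σ : Signal X) : Set (WState X L C) :=
  {q | (∀ c, 0 ≤ q.2.1 c) ∧ 0 ≤ q.2.2.1 ∧ q.2.2.1 ≤ σ.dur ∧ StutterFree q.2.2.2}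

/-- The initial states `Q₀ = {(l₀, 0⃗, 0, ε) | l₀ ∈ L₀}` of the WTTS. -/
def wttsQ0 {X L C : Type} (A : TSA X L C) : Set (WState X L C) :=
  {q | q.1 ∈ A.L₀ ∧ q.2.1 = (fun _ => 0) ∧ q.2.2.1 = 0 ∧ q.2.2.2 = []}

/-- The accepting states `Q_F = {(l_F, ν, |σ|, ε) | l_F ∈ L_F}` of the WTTS. -/
def wttsQF {X L C : Type} (σ : Signal X) (A : TSA X L C) : Set (WState X L C) :=
  {q | q.1 ∈ A.LF ∧ (∀ c, 0 ≤ q.2.1 c) ∧ q.2.2.1 = σ.dur ∧ q.2.2.2 = []}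

/-- The transition relation `→` of the WTTS of `σ` and (the TSA of) a TSWA:
either a discrete transition of the TSA, or time elapse. -/
def wttsStep {X L C : Type} (σ : Signal X) (A : TSA X L C)
    (q q' : WState X L C) : Prop :=
  q ∈ wttsQ σ ∧ q' ∈ wttsQ σ ∧
  ((∃ g ρ, (q.1, g, ρ, q'.1) ∈ A.Δ ∧ guardSat q.2.1 g ∧ q'.2.1 = resetVal q.2.1 ρ ∧
      q'.2.2.1 = q.2.2.1 ∧ q.2.2.2 ≠ [] ∧ q'.2.2.2 = []) ∨
   (q.1 = q'.1 ∧ ∃ τ : ℝ, 0 < τ ∧ q'.2.1 = (fun c => q.2.1 c + τ) ∧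
      q'.2.2.1 = q.2.2.1 + τ ∧
      q'.2.2.2 = absCat q.2.2.2 (σ.valuesOn q.2.2.1 (q.2.2.1 + τ))))

/-- The weight of a WTTS transition: `κ(Λ(l), ā)` if `ā' = ε`, and `e⊗` otherwise. -/
noncomputable def wttsWeight {X L C S : Type} [CSemiring S] [CompleteCSemiring S]
    (W : TSWA X L C S) (q q' : WState X L C) : S :=
  if q'.2.2.2 = [] then W.κ (W.Λ q.1) q.2.2.2 else CSemiring.one

/-- A path of a transition system: a finite sequence of states related by
consecutive transitions. -/
def IsPath {Q : Type} (step : Q → Q → Prop) (π : List Q) : Prop := π.Chain' step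

/-- The path value: the `⊗`-product of the weights of the transitions of a path. -/
noncomputable def pathVal {Q S : Type} [CSemiring S] [CompleteCSemiring S]
    (w : Q → Q → S) : List Q → S
  | [] => CSemiring.one
  | [_] => CSemiring.one
  | q :: q' :: r => CSemiring.mul (w q q') (pathVal w (q' :: r))

/-- The set of paths from a state of `A` to a state of `B`. -/
def PathsBetween {Q : Type} (step : Q → Q → Prop) (A B : Set Q) : Set (List Q) :=
  {π | IsPath step π ∧ (∃ a ∈ A, π.head? = some a) ∧ (∃ b ∈ B, π.getLast? = some b)}

/-- The shortest distance from `A` to `B`: the `⊕`-sum, over all paths from `A` to `B`,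
of the `⊗`-product of the transition weights. -/
noncomputable def sDist {Q S : Type} [CSemiring S] [CompleteCSemiring S]
    (step : Q → Q → Prop) (w : Q → Q → S) (A B : Set Q) : S :=
  CompleteCSemiring.iSum fun π : ↥(PathsBetween step A B) => pathVal w π.1

/-- The trace value `α(S)` of the WTTS `S` of `σ` and `W`: the shortest distance from
the initial states to the accepting states, i.e. `⊕_{π ∈ ARuns(S)} μ(π)`. -/
noncomputable def traceValue {X L C S : Type} [CSemiring S] [CompleteCSemiring S]
    (σ : Signal X) (W : TSWA X L C S) : S :=
  sDist (wttsStep σ W.toTSA) (wttsWeight W) (wttsQ0 W.toTSA) (wttsQF σ W.toTSA)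

/-- The clocks `C ⊔ {T}`: `none` is the fresh clock `T` tracking absolute time. -/
abbrev ClockT (C : Type) : Type := Option C

/-- Symbolic states of the WSTTS: `(l, Z, ā)`. -/
abbrev SymState (X L C : Type) : Type := L × Set (ClockT C → ℝ) × List (X → ℝ)

/-- A zone over the clock set `C'`: a set of clock valuations defined by a finite
conjunction of constraints `c ⋈ d` and `c − c' ⋈ d`. -/
def IsZone {C' : Type} (Z : Set (C' → ℝ)) : Prop :=
  ∃ atoms : List ((C' × CmpOp × ℝ) ⊕ (C' × C' × CmpOp × ℝ)),
    Z = {ν | ∀ a ∈ atoms,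
      match a with
      | .inl p => p.2.1.eval (ν p.1) p.2.2
      | .inr p => p.2.2.1.eval (ν p.1 - ν p.2.1) p.2.2.2}

/-- The symbolic state space `Q^sym` of the WSTTS of `σ` and a TSWA. -/
def symQ {X L C : Type} (σ : Signal X) : Set (SymState X L C) :=
  {q | IsZone q.2.1 ∧ q.2.1.Nonempty ∧ (∀ ν ∈ q.2.1, ν none ≤ σ.dur) ∧
    StutterFree q.2.2 ∧
    (q.2.2 = [] ∨ ∀ ν ∈ q.2.1, absCat q.2.2 [σ.valAt (ν none)] = q.2.2)}

/-- The all-zero clock valuation over `C ⊔ {T}`. -/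
noncomputable def zeroValT {C : Type} : ClockT C → ℝ := fun _ => 0

/-- The initial symbolic states `Q₀^sym = {(l₀, {0⃗}, ε) | l₀ ∈ L₀}`. -/
def symQ0 {X L C : Type} (A : TSA X L C) : Set (SymState X L C) :=
  {q | q.1 ∈ A.L₀ ∧ q.2.1 = {zeroValT} ∧ q.2.2 = []}

/-- The accepting symbolic states
`Q_F^sym = {(l_F, Z, ε) ∈ Q^sym | ∃ν ∈ Z, ν(T) = |σ|}`. -/
def symQF {X L C : Type} (σ : Signal X) (A : TSA X L C) : Set (SymState X L C) :=
  {q | q ∈ symQ σ ∧ q.1 ∈ A.LF ∧ q.2.2 = [] ∧ ∃ ν ∈ q.2.1, ν none = σ.dur}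

/-- The reset `ν[ρ := 0]` of a valuation over `C ⊔ {T}` (the clock `T` is never reset). -/
noncomputable def symResetVal {C : Type} (ν : ClockT C → ℝ) (ρ : Set C) : ClockT C → ℝ :=
  fun c => match c with
    | none => ν none
    | some c' => if c' ∈ ρ then 0 else ν (some c')

/-- The up-closure `{ν + τ | ν ∈ Z, τ > 0}` of a zone under time elapse. -/
def upClosure {C : Type} (Z : Set (ClockT C → ℝ)) : Set (ClockT C → ℝ) :=
  {ν' | ∃ ν ∈ Z, ∃ τ : ℝ, 0 < τ ∧ ν' = fun c => ν c + τ}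

/-- The transition relation `→^sym` of the WSTTS of `σ` and (the TSA of) a TSWA:
a discrete transition of the TSA, a punctual time elapse, or a non-punctual time elapse. -/
def symStep {X L C : Type} (σ : Signal X) (A : TSA X L C)
    (q q' : SymState X L C) : Prop :=
  q ∈ symQ σ ∧ q' ∈ symQ σ ∧
  ((∃ g ρ, (q.1, g, ρ, q'.1) ∈ A.Δ ∧
      q'.2.1 = {ν' | ∃ ν ∈ q.2.1, guardSat (fun c => ν (some c)) g ∧ ν' = symResetVal ν ρ} ∧
      q.2.2 ≠ [] ∧ q'.2.2 = []) ∨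
   (q.1 = q'.1 ∧
      (∃ ν ∈ q.2.1, ∃ ν' ∈ q'.2.1, q'.2.2 = absCat q.2.2 (σ.valuesOn (ν none) (ν' none))) ∧
      (∃ i, 1 ≤ i ∧ i ≤ σ.len ∧
        (q'.2.1 = upClosure q.2.1 ∩ {ν | ν none = σ.pref i} ∨
         q'.2.1 = upClosure q.2.1 ∩ {ν | σ.pref (i-1) < ν none ∧ ν none < σ.pref i}))))

/-- The weight of a WSTTS transition: `κ(Λ(l), ā)` if `ā' = ε`, and `e⊗` otherwise. -/
noncomputable def symWeight {X L C S : Type} [CSemiring S] [CompleteCSemiring S]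
    (W : TSWA X L C S) (q q' : SymState X L C) : S :=
  if q'.2.2 = [] then W.κ (W.Λ q.1) q.2.2 else CSemiring.one

/-- The symbolic trace value `α^sym(S^sym)`: the shortest distance from the initial
symbolic states to the accepting symbolic states, i.e. `⊕_{π ∈ ARuns(S^sym)} μ^sym(π)`. -/
noncomputable def symTraceValue {X L C S : Type} [CSemiring S] [CompleteCSemiring S]
    (σ : Signal X) (W : TSWA X L C S) : S :=
  sDist (symStep σ W.toTSA) (symWeight W) (symQ0 W.toTSA) (symQF σ W.toTSA)

/-- `Reach`: the initial states together with all states reachable from them. -/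
def reach {Q : Type} (step : Q → Q → Prop) (init : Set Q) : Set Q :=
  {q | ∃ q0 ∈ init, Relation.ReflTransGen step q0 q}

/-- Tuples `(l, Z, ā, s)` occurring in intermediate weights. -/
abbrev WTuple (X L C S : Type) : Type := L × Set (ClockT C → ℝ) × List (X → ℝ) × S

/-- The increment function `incr(a,t)`: maps a set `w` of tuples `(l,Z,ā,s)` to the set
of tuples `(l',Z',ā',s')` such that every `ν' ∈ Z'` satisfies `ν'(T) = t` and
`s' = ⊕_{(l,Z,ā,s)∈w} s ⊗ Dist({(l,Z,ā)},{(l',Z',ā')})` computed in the WSTTS of the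
constant signal `a^t` and `W`. -/
noncomputable def incr {X L C S : Type} [CSemiring S] [CompleteCSemiring S]
    (W : TSWA X L C S) (a : X → ℝ) (t : ℝ)
    (w : Set (WTuple X L C S)) : Set (WTuple X L C S) :=
  {p | IsZone p.2.1 ∧ StutterFree p.2.2.1 ∧ (∀ ν ∈ p.2.1, ν none = t) ∧
    p.2.2.2 = CompleteCSemiring.iSum fun q : ↥w =>
      CSemiring.mul q.1.2.2.2
        (sDist (symStep (constSignal a t) W.toTSA) (symWeight W)
          ({(q.1.1, q.1.2.1, q.1.2.2.1)} : Set (SymState X L C))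
          ({(p.1, p.2.1, p.2.2.1)} : Set (SymState X L C)))}

/-- The intermediate weight `weight_i = (incr(a_i,T_i) ∘ ⋯ ∘ incr(a₁,T₁))
({(l₀,{0⃗},ε,e⊗) | l₀ ∈ L₀})`, where `T_j = τ₁ + ⋯ + τ_j`. -/
noncomputable def weightSeq {X L C S : Type} [CSemiring S] [CompleteCSemiring S]
    (σ : Signal X) (W : TSWA X L C S) : ℕ → Set (WTuple X L C S)
  | 0 => {p | p.1 ∈ W.L₀ ∧ p.2.1 = {zeroValT} ∧ p.2.2.1 = [] ∧ p.2.2.2 = CSemiring.one}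
  | i + 1 => incr W (σ.val i) (σ.pref (i+1)) (weightSeq σ W i)

/-- The extension of a clock valuation over `C` to `C ⊔ {T}`, assigning `t` to `T`. -/
def extT {C : Type} (ν : C → ℝ) (t : ℝ) : ClockT C → ℝ :=
  fun c => match c with
    | none => t
    | some c' => ν c'

/-- The restriction `ν|_C` of a clock valuation over `C ⊔ {T}` to `C`. -/
def restrC {C : Type} (ν : ClockT C → ℝ) : C → ℝ := fun c => ν (some c)

/-- The extension of a clock valuation over `C ⊔ {T}` to `C ⊔ {T, 0}`, where the
reference clock `0` (encoded as `none`) has constant value `0`. -/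
def extRef {C : Type} (ν : ClockT C → ℝ) : Option (ClockT C) → ℝ :=
  fun c => match c with
    | none => 0
    | some c' => ν c'

/-- The canonical bound `d_{Z,c,c'}` of a zone: the least constant bounding
`ν(c) − ν(c')` over `Z` (with `∞ = ⊤` when unbounded). -/
noncomputable def zoneBound {C : Type} (Z : Set (ClockT C → ℝ))
    (c c' : Option (ClockT C)) : EReal :=
  sSup ((fun ν => ((extRef ν c - extRef ν c' : ℝ) : EReal)) '' Z)

end QTPM
namespace QTPM

/-! ### Auxiliary lemmas -/

section PrefLemmas

variable {X : Type} (σ : Signal X)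

lemma Signal.pref_zero : σ.pref 0 = 0 := by simp [Signal.pref]

lemma Signal.pref_lt_succ {i : ℕ} (h : i < σ.len) : σ.pref i < σ.pref (i+1) := by
  have hlen : i < (σ.entries.map Prod.snd).length := by simpa [Signal.len] using h
  have hlen' : i < σ.entries.length := by simpa [Signal.len] using h
  have hs : σ.pref (i+1) = σ.pref i + (σ.entries.map Prod.snd)[i] := by
    unfold Signal.pref
    rw [List.map_take, List.map_take]
    exact List.sum_take_succ _ i hlen
  have hpos : 0 < (σ.entries.map Prod.snd)[i] := by
    rw [List.getElem_map]
    exact σ.pos _ (List.getElem_mem hlen')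
  linarith

lemma Signal.pref_le_succ (i : ℕ) : σ.pref i ≤ σ.pref (i+1) := by
  by_cases h : i < σ.len
  · exact (σ.pref_lt_succ h).le
  · have h' : σ.entries.length ≤ i := by simpa [Signal.len] using not_lt.mp h
    unfold Signal.pref
    rw [List.take_of_length_le h', List.take_of_length_le (h'.trans (Nat.le_succ i))]

lemma Signal.pref_mono : Monotone σ.pref :=
  monotone_nat_of_le_succ σ.pref_le_succ

lemma Signal.pref_nonneg (i : ℕ) : 0 ≤ σ.pref i := by
  have := σ.pref_mono (Nat.zero_le i)
  rwa [σ.pref_zero] at this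

lemma Signal.pref_gap {i j : ℕ} (hi : 1 ≤ i) (h : σ.pref (i-1) < σ.pref j) :
    σ.pref i ≤ σ.pref j := by
  rcases le_or_gt i j with hij | hij
  · exact σ.pref_mono hij
  · have hji : j ≤ i - 1 := by omega
    exact ((σ.pref_mono hji).not_gt h).elim

end PrefLemmas

section DestutterLemmas

variable {α : Type} {R : α → α → Prop} [DecidableRel R]

lemma destutter'_append_decomp (l : List α) :
    ∀ a : α, ∃ D : List α, ∃ c : α,
      l.destutter' R a = D ++ [c] ∧
      ∀ l' : List α, (l ++ l').destutter' R a = D ++ l'.destutter' R c := by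
  induction l with
  | nil => exact fun a => ⟨[], a, rfl, fun l' => rfl⟩
  | cons b l ih =>
    intro a
    by_cases h : R a b
    · obtain ⟨D, c, h1, h2⟩ := ih b
      refine ⟨a :: D, c, ?_, fun l' => ?_⟩
      · rw [List.destutter'_cons, if_pos h, h1]; rfl
      · show ((b :: (l ++ l')).destutter' R a) = _
        rw [List.destutter'_cons, if_pos h, h2 l']; rfl
    · obtain ⟨D, c, h1, h2⟩ := ih a
      refine ⟨D, c, ?_, fun l' => ?_⟩
      · rw [List.destutter'_cons, if_neg h, h1]
      · show ((b :: (l ++ l')).destutter' R a) = _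
        rw [List.destutter'_cons, if_neg h, h2 l']

lemma destutter_append_decomp {A : List α} (hA : A ≠ []) :
    ∃ D : List α, ∃ c : α, A.destutter R = D ++ [c] ∧
      ∀ B : List α, (A ++ B).destutter R = D ++ B.destutter' R c := by
  obtain ⟨a, A', rfl⟩ := List.exists_cons_of_ne_nil hA
  obtain ⟨D, c, h1, h2⟩ := destutter'_append_decomp (R := R) A' a
  refine ⟨D, c, by rw [List.destutter_cons', h1], fun B => ?_⟩
  rw [List.cons_append, List.destutter_cons', h2]

lemma destutter_destutter_append (A B : List α) :
    (A.destutter R ++ B).destutter R = (A ++ B).destutter R := by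
  rcases eq_or_ne A [] with rfl | hA
  · rfl
  obtain ⟨D, c, h1, h2⟩ := destutter_append_decomp (R := R) hA
  have hA2 : A.destutter R ≠ [] := by rw [h1]; simp
  obtain ⟨E, d, h3, h4⟩ := destutter_append_decomp (R := R) hA2
  rw [List.destutter_idem, h1] at h3
  obtain ⟨rfl, hcd⟩ := List.append_inj' h3.symm rfl
  obtain rfl : d = c := by simpa using hcd
  rw [h4 B, h2 B]

lemma destutter'_destutter' (hR : ∀ a b : α, ¬ R a b ↔ a = b) (l : List α) :
    ∀ a b : α, ((l.destutter' R a).destutter' R b) = ((a :: l).destutter' R b) := by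
  induction l with
  | nil => intro a b; rfl
  | cons c l ih =>
    intro a b
    by_cases hac : R a c
    · have e1 : (c :: l).destutter' R a = a :: l.destutter' R c := by
        rw [List.destutter'_cons, if_pos hac]
      by_cases hba : R b a
      · rw [e1, List.destutter'_cons, if_pos hba, ih c a,
          show (a :: c :: l).destutter' R b = b :: (c :: l).destutter' R a from by
            rw [List.destutter'_cons, if_pos hba]]
      · rw [e1, List.destutter'_cons, if_neg hba, ih c b,
          show (a :: c :: l).destutter' R b = (c :: l).destutter' R b from by
            rw [List.destutter'_cons (l := c :: l), if_neg hba]]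
    · obtain rfl : a = c := (hR a c).mp hac
      have e1 : (a :: l).destutter' R a = l.destutter' R a := by
        rw [List.destutter'_cons, if_neg hac]
      rw [e1, ih a b]
      by_cases hba : R b a
      · rw [show (a :: a :: l).destutter' R b = b :: (a :: l).destutter' R a from by
          rw [List.destutter'_cons (l := a :: l), if_pos hba],
          show (a :: l).destutter' R b = b :: l.destutter' R a from by
          rw [List.destutter'_cons, if_pos hba], e1]
      · rw [show (a :: a :: l).destutter' R b = (a :: l).destutter' R b from by
          rw [List.destutter'_cons (l := a :: l), if_neg hba]]

lemma destutter_append_destutter (hR : ∀ a b : α, ¬ R a b ↔ a = b) (A B : List α) :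
    (A ++ B.destutter R).destutter R = (A ++ B).destutter R := by
  rcases eq_or_ne B [] with rfl | hB
  · rfl
  obtain ⟨b, B', rfl⟩ := List.exists_cons_of_ne_nil hB
  rcases eq_or_ne A [] with rfl | hA
  · simpa using List.destutter_idem (b :: B') R
  obtain ⟨D, c, h1, h2⟩ := destutter_append_decomp (R := R) hA
  rw [h2, h2, List.destutter_cons', destutter'_destutter' hR]

lemma destutter_append_dup (hR : ∀ a b : α, ¬ R a b ↔ a = b) (L r : List α) (x : α) :
    (L ++ x :: x :: r).destutter R = (L ++ x :: r).destutter R := by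
  have h1 : (x :: x :: r).destutter R = (x :: r).destutter R := by
    rw [List.destutter_cons', List.destutter_cons', List.destutter'_cons,
      if_neg ((hR x x).mpr rfl)]
  calc (L ++ x :: x :: r).destutter R
      = (L ++ (x :: x :: r).destutter R).destutter R :=
        (destutter_append_destutter hR _ _).symm
    _ = (L ++ (x :: r).destutter R).destutter R := by rw [h1]
    _ = (L ++ x :: r).destutter R := destutter_append_destutter hR _ _

end DestutterLemmas

section SplitLemma

lemma filter_split {α : Type} (p q r : α → Bool) :
    ∀ l : List α, (∀ x ∈ l, (r x = true ↔ (p x = true ∨ q x = true))) →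
      l.Pairwise (fun x y => ¬(q x = true ∧ p y = true)) →
      ∃ l₁ m l₂ : List α, (m = [] ∨ ∃ x, m = [x]) ∧
        l.filter r = l₁ ++ (m ++ l₂) ∧ l.filter p = l₁ ++ m ∧ l.filter q = m ++ l₂ := by
  intro l
  induction l with
  | nil => exact fun _ _ => ⟨[], [], [], Or.inl rfl, rfl, rfl, rfl⟩
  | cons x l ih =>
    intro h1 h2
    rw [List.pairwise_cons] at h2
    obtain ⟨hx, hl⟩ := h2
    have h1l : ∀ y ∈ l, (r y = true ↔ (p y = true ∨ q y = true)) :=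
      fun y hy => h1 y (List.mem_cons_of_mem _ hy)
    by_cases hpx : p x = true
    · by_cases hqx : q x = true
      · have hrx : r x = true := (h1 x List.mem_cons_self).mpr (Or.inl hpx)
        have hpl : l.filter p = [] :=
          List.filter_eq_nil_iff.mpr (fun y hy hpy => hx y hy ⟨hqx, hpy⟩)
        have hrq : l.filter r = l.filter q := by
          apply List.filter_congr
          intro y hy
          have hiff := h1l y hy
          have hpy : ¬ p y = true := fun hpy => hx y hy ⟨hqx, hpy⟩
          cases hqy : q y <;> cases hry : r y <;> simp_all
        exact ⟨[], [x], l.filter q, Or.inr ⟨x, rfl⟩,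
          by simp [List.filter_cons, hrx, hrq],
          by simp [List.filter_cons, hpx, hpl],
          by simp [List.filter_cons, hqx]⟩
      · have hrx : r x = true := (h1 x List.mem_cons_self).mpr (Or.inl hpx)
        obtain ⟨l₁, m, l₂, hm, ha, hb, hc⟩ := ih h1l hl
        exact ⟨x :: l₁, m, l₂, hm,
          by simp [List.filter_cons, hrx, ha],
          by simp [List.filter_cons, hpx, hb],
          by simp [List.filter_cons, hqx, hc]⟩
    · by_cases hqx : q x = true
      · have hrx : r x = true := (h1 x List.mem_cons_self).mpr (Or.inr hqx)
        have hpl : l.filter p = [] :=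
          List.filter_eq_nil_iff.mpr (fun y hy hpy => hx y hy ⟨hqx, hpy⟩)
        have hrq : l.filter r = l.filter q := by
          apply List.filter_congr
          intro y hy
          have hiff := h1l y hy
          have hpy : ¬ p y = true := fun hpy => hx y hy ⟨hqx, hpy⟩
          cases hqy : q y <;> cases hry : r y <;> simp_all
        exact ⟨[], [], x :: l.filter q, Or.inl rfl,
          by simp [List.filter_cons, hrx, hrq],
          by simp [List.filter_cons, hpx, hpl],
          by simp [List.filter_cons, hqx]⟩
      · have hrx : ¬ r x = true := fun h => by
          rcases (h1 x List.mem_cons_self).mp h with h' | h' <;> contradiction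
        obtain ⟨l₁, m, l₂, hm, ha, hb, hc⟩ := ih h1l hl
        exact ⟨l₁, m, l₂, hm,
          by simp [List.filter_cons, hrx, ha],
          by simp [List.filter_cons, hpx, hb],
          by simp [List.filter_cons, hqx, hc]⟩

end SplitLemma

section ValuesOnLemmas

variable {X : Type} (σ : Signal X)

lemma Signal.valuesOn_congr {t s s' : ℝ}
    (h : ∀ j : ℕ, σ.pref j < s ↔ σ.pref j < s') :
    σ.valuesOn t s = σ.valuesOn t s' := by
  unfold Signal.valuesOn
  congr 2
  apply List.filter_congr
  intro j _
  apply decide_eq_decide.mpr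
  constructor
  · rintro ⟨h1, h2⟩; exact ⟨(h j).mp h1, h2⟩
  · rintro ⟨h1, h2⟩; exact ⟨(h j).mpr h1, h2⟩

lemma Signal.valuesOn_glue {t u w v : ℝ}
    (hSE : ∀ j : ℕ, σ.pref j < u ↔ σ.pref j < w) (hwv : w < v)
    (hLE : ∀ j : ℕ, u < σ.pref (j+1) → t < σ.pref (j+1)) :
    absCat (σ.valuesOn t u) (σ.valuesOn u v) = σ.valuesOn t v := by
  have hNe : ∀ a b : (X → ℝ), ¬ a ≠ b ↔ a = b := fun a b => not_not
  have h1 : ∀ x ∈ List.range σ.len,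
      ((fun i => decide (σ.pref i < v ∧ t < σ.pref (i+1))) x = true ↔
        (((fun i => decide (σ.pref i < u ∧ t < σ.pref (i+1))) x = true) ∨
         ((fun i => decide (σ.pref i < v ∧ u < σ.pref (i+1))) x = true))) := by
    intro j hj
    simp only [decide_eq_true_eq]
    constructor
    · rintro ⟨hjv, hjt⟩
      by_cases hju : σ.pref j < u
      · exact Or.inl ⟨hju, hjt⟩
      · exact Or.inr ⟨hjv, lt_of_le_of_lt (not_lt.mp hju)
          (σ.pref_lt_succ (List.mem_range.mp hj))⟩
    · rintro (⟨hju, hjt⟩ | ⟨hjv, hju⟩)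
      · exact ⟨((hSE j).mp hju).trans hwv, hjt⟩
      · exact ⟨hjv, hLE j hju⟩
  have h2 : (List.range σ.len).Pairwise (fun x y =>
      ¬(((fun i => decide (σ.pref i < v ∧ u < σ.pref (i+1))) x = true) ∧
        ((fun i => decide (σ.pref i < u ∧ t < σ.pref (i+1))) y = true))) := by
    refine (show (List.range σ.len).Pairwise (· < ·) from List.pairwise_lt_range).imp ?_
    intro a b hab
    simp only [decide_eq_true_eq]
    rintro ⟨⟨-, hua⟩, ⟨hbu, -⟩⟩
    have := σ.pref_mono (show a + 1 ≤ b from hab)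
    linarith
  obtain ⟨l₁, m, l₂, hm, hfr, hfp, hfq⟩ :=
    filter_split (fun i => decide (σ.pref i < u ∧ t < σ.pref (i+1)))
      (fun i => decide (σ.pref i < v ∧ u < σ.pref (i+1)))
      (fun i => decide (σ.pref i < v ∧ t < σ.pref (i+1)))
      (List.range σ.len) h1 h2
  unfold absCat Signal.valuesOn
  rw [hfp, hfq, hfr]
  rw [destutter_destutter_append, destutter_append_destutter hNe]
  rcases hm with rfl | ⟨x, rfl⟩
  · simp
  · have he : ((l₁ ++ [x]).map σ.val) ++ (([x] ++ l₂).map σ.val) =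
        (l₁.map σ.val) ++ (σ.val x :: σ.val x :: l₂.map σ.val) := by
      simp
    rw [he, destutter_append_dup hNe]
    congr 1
    simp

end ValuesOnLemmas

section ZoneSliceHelper

lemma zs_helper {X C : Type} (σ : Signal X) {Z : Set (ClockT C → ℝ)}
    (hZS : (∀ ν ∈ Z, ∀ ν' ∈ Z, ν none = ν' none) ∨
      ∃ i : ℕ, 1 ≤ i ∧ ∀ ν ∈ Z, σ.pref (i-1) < ν none ∧ ν none < σ.pref i) :
    (∀ ν ∈ Z, ∀ ν' ∈ Z, ∀ k : ℕ, σ.pref k < ν none → σ.pref k < ν' none) ∧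
    (∀ ν ∈ Z, ∀ ν' ∈ Z, ∀ k : ℕ, σ.pref k ≤ ν none → σ.pref k ≤ ν' none) := by
  constructor
  · intro ν hν ν' hν' k hk
    rcases hZS with heq | ⟨i', hi', hint⟩
    · rwa [heq ν hν ν' hν'] at hk
    · obtain ⟨h1, h2⟩ := hint ν hν
      obtain ⟨h1', h2'⟩ := hint ν' hν'
      by_contra hc
      push_neg at hc
      have h3 : σ.pref (i'-1) < σ.pref k := lt_of_lt_of_le h1' hc
      have h4 := σ.pref_gap hi' h3
      linarith
  · intro ν hν ν' hν' k hk
    rcases hZS with heq | ⟨i', hi', hint⟩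
    · rwa [heq ν hν ν' hν'] at hk
    · obtain ⟨h1, h2⟩ := hint ν hν
      obtain ⟨h1', h2'⟩ := hint ν' hν'
      by_contra hc
      push_neg at hc
      have h3 : σ.pref (i'-1) < σ.pref k := lt_of_lt_of_le h1' hc.le
      have h4 := σ.pref_gap hi' h3
      linarith

end ZoneSliceHelper

/-- For every reachable symbolic state `(l,Z,ā)` of the WSTTS of `σ`
and `W`, either `ā = ε`, or there exists `t ≥ 0` such that for all `ν ∈ Z`,
`ā = Values(σ([t, ν(T))))`. -/
theorem statement5 {X L C S : Type} [Finite X] [Finite L] [Finite C]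
    [CSemiring S] [CompleteCSemiring S]
    (W : TSWA X L C S) (σ : Signal X) :
    ∀ q ∈ reach (symStep σ W.toTSA) (symQ0 W.toTSA),
      q.2.2 = [] ∨ ∃ t : ℝ, 0 ≤ t ∧ ∀ ν ∈ q.2.1, q.2.2 = σ.valuesOn t (ν none) := by
  have key : ∀ q ∈ reach (symStep σ W.toTSA) (symQ0 W.toTSA),
      (∀ ν ∈ q.2.1, (0:ℝ) ≤ ν none) ∧
      ((∀ ν ∈ q.2.1, ∀ ν' ∈ q.2.1, ν none = ν' none) ∨
        ∃ i : ℕ, 1 ≤ i ∧ ∀ ν ∈ q.2.1, σ.pref (i-1) < ν none ∧ ν none < σ.pref i) ∧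
      (q.2.2 = [] ∨ ∃ t : ℝ, 0 ≤ t ∧ (∀ ν ∈ q.2.1, q.2.2 = σ.valuesOn t (ν none)) ∧
        (∀ ν ∈ q.2.1, ∀ j : ℕ, ν none < σ.pref (j+1) → t < σ.pref (j+1))) := by
    rintro q ⟨q0, hq0, hsteps⟩
    induction hsteps with
    | refl =>
      obtain ⟨h0, hZ, hw0⟩ := hq0
      refine ⟨?_, Or.inl ?_, Or.inl hw0⟩
      · intro ν hν
        rw [hZ] at hν
        rw [Set.mem_singleton_iff] at hν
        subst hν
        exact le_refl 0
      · intro ν hν ν' hν'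
        rw [hZ, Set.mem_singleton_iff] at hν hν'
        rw [hν, hν']
    | tail hsteps hstep ih =>
      rename_i b c
      obtain ⟨hbQ, hcQ, hcase⟩ := hstep
      obtain ⟨ihpos, ihZS, ihw⟩ := ih
      rcases hcase with ⟨g, ρ, hΔ, hZ', hne, hnil⟩ |
        ⟨hloc, ⟨ν₀, hν₀, ν₀', hν₀', hval0⟩, i, hi1, hilen, hslice⟩
      · -- discrete transition
        refine ⟨?_, ?_, Or.inl hnil⟩
        · intro ν' hν'
          rw [hZ'] at hν'
          obtain ⟨ν, hν, -, rfl⟩ := hν'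
          simpa [symResetVal] using ihpos ν hν
        · rcases ihZS with heq | ⟨i, hi1, hint⟩
          · left
            intro ν' hν' ν'' hν''
            rw [hZ'] at hν' hν''
            obtain ⟨ν, hν, -, rfl⟩ := hν'
            obtain ⟨μ, hμ, -, rfl⟩ := hν''
            simpa [symResetVal] using heq ν hν μ hμ
          · right
            refine ⟨i, hi1, ?_⟩
            intro ν' hν'
            rw [hZ'] at hν'
            obtain ⟨ν, hν, -, rfl⟩ := hν'
            simpa [symResetVal] using hint ν hν
      · -- time-elapse transition
        have hup : ∀ ν'' ∈ c.2.1, ∃ ν₂, ν₂ ∈ b.2.1 ∧ ν₂ none < ν'' none := by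
          intro ν'' hν''
          have hmem : ν'' ∈ upClosure b.2.1 := by
            rcases hslice with h | h <;> (rw [h] at hν''; exact hν''.1)
          obtain ⟨ν₂, hν₂, τ, hτ, rfl⟩ := hmem
          exact ⟨ν₂, hν₂, by simpa using lt_add_of_pos_right (ν₂ none) hτ⟩
        have hZS' : (∀ ν ∈ c.2.1, ∀ ν' ∈ c.2.1, ν none = ν' none) ∨
            ∃ i : ℕ, 1 ≤ i ∧ ∀ ν ∈ c.2.1, σ.pref (i-1) < ν none ∧ ν none < σ.pref i := by
          rcases hslice with h | h
          · left
            intro ν hν ν' hν'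
            rw [h] at hν hν'
            rw [hν.2, hν'.2]
          · right
            refine ⟨i, hi1, ?_⟩
            intro ν hν
            rw [h] at hν
            exact hν.2
        have hpos' : ∀ ν'' ∈ c.2.1, (0:ℝ) ≤ ν'' none := by
          intro ν'' hν''
          obtain ⟨ν₂, hν₂, hlt⟩ := hup ν'' hν''
          exact ((ihpos ν₂ hν₂).trans hlt.le)
        have zs_b := zs_helper σ ihZS
        have zs_c := zs_helper σ hZS'
        refine ⟨hpos', hZS', ?_⟩
        right
        rcases ihw with hnil | ⟨t, ht0, hval, hle⟩
        · -- previous value sequence is empty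
          rw [hnil] at hval0
          have hw2 : c.2.2 = σ.valuesOn (ν₀ none) (ν₀' none) := by
            rw [hval0]
            show absCat [] _ = _
            unfold absCat Signal.valuesOn
            rw [List.nil_append, List.destutter_idem]
          refine ⟨ν₀ none, ihpos ν₀ hν₀, ?_, ?_⟩
          · intro ν'' hν''
            rw [hw2]
            exact σ.valuesOn_congr (fun j =>
              ⟨fun h => zs_c.1 ν₀' hν₀' ν'' hν'' j h,
               fun h => zs_c.1 ν'' hν'' ν₀' hν₀' j h⟩)
          · intro ν'' hν'' j hj
            obtain ⟨ν₂, hν₂, hlt⟩ := hup ν'' hν''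
            by_contra hcle
            push_neg at hcle
            have := zs_b.2 ν₀ hν₀ ν₂ hν₂ (j+1) hcle
            linarith
        · -- previous value sequence is nonempty
          obtain ⟨ν₁, hν₁, hlt₁⟩ := hup ν₀' hν₀'
          have hcrux := σ.valuesOn_glue (t := t) (u := ν₀ none) (w := ν₁ none)
            (v := ν₀' none)
            (fun j => ⟨fun h => zs_b.1 ν₀ hν₀ ν₁ hν₁ j h,
                       fun h => zs_b.1 ν₁ hν₁ ν₀ hν₀ j h⟩)
            hlt₁
            (fun j hj => hle ν₀ hν₀ j hj)
          have hw2 : c.2.2 = σ.valuesOn t (ν₀' none) := by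
            rw [hval0, hval ν₀ hν₀, hcrux]
          refine ⟨t, ht0, ?_, ?_⟩
          · intro ν'' hν''
            rw [hw2]
            exact σ.valuesOn_congr (fun j =>
              ⟨fun h => zs_c.1 ν₀' hν₀' ν'' hν'' j h,
               fun h => zs_c.1 ν'' hν'' ν₀' hν₀' j h⟩)
          · intro ν'' hν'' j hj
            obtain ⟨ν₂, hν₂, hlt₂⟩ := hup ν'' hν''
            exact hle ν₂ hν₂ j (lt_trans hlt₂ hj)
  intro q hq
  rcases (key q hq).2.2 with h | ⟨t, ht0, hval, -⟩
  · exact Or.inl h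
  · exact Or.inr ⟨t, ht0, hval⟩

end QTPM
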